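/- For every integer d ≥ 2 and every real z ≥ 0, the first Riesz-mean of the Laplacian eigenvalues on the d-sphere satisfies R₁(z) ≥ (4/((d+2)·d!))·z^{d/2+1}. -/

import Mathlib

/-- Multiplicity of the eigenvalue `l(l+d−1)` of the Laplacian on the `d`-sphere:
`m_{l,d} = C(d+l, l) − C(d+l−2, l−2)`, the second term being `0` for `l < 2`. -/
noncomputable def sphereMult (d l : ℕ) : ℝ :=
  (Nat.choose (d + l) l : ℝ) - if 2 ≤ l then (Nat.choose (d + l - 2) (l - 2) : ℝ) else 0

/-- First Riesz-mean of the Laplacian eigenvalues on the `d`-sphere. -/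
noncomputable def R1Sd (d : ℕ) (z : ℝ) : ℝ :=
  ∑' l : ℕ, sphereMult d l * max (z - (l : ℝ) * ((l : ℝ) + (d : ℝ) - 1)) 0

open Finset

noncomputable def RMSg (d l : ℕ) : ℝ := (2*(l:ℝ)+d)^2 * ∏ j ∈ range (d-1), ((l:ℝ)+1+j)

/-- eigenvalue `l(l+d-1)` as a real number -/
noncomputable def RMSlam (d l : ℕ) : ℝ := (l : ℝ) * ((l : ℝ) + (d : ℝ) - 1)

lemma RMS_fact_prod (d l : ℕ) :
    l.factorial * ∏ j ∈ range d, (l+1+j) = (d+l).factorial := by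
  induction d with
  | zero => simp
  | succ n ih =>
    rw [Finset.prod_range_succ, ← mul_assoc, ih,
      show n+1+l = (n+l)+1 by omega, Nat.factorial_succ,
      show l+1+n = n+l+1 by omega, mul_comm]

lemma RMS_choose_mul (d l : ℕ) :
    ((d+l).choose l) * d.factorial = ∏ j ∈ range d, (l+1+j) := by
  have h := Nat.choose_mul_factorial_mul_factorial (Nat.le_add_left l d)
  rw [Nat.add_sub_cancel] at h
  have h2 := RMS_fact_prod d l
  apply Nat.eq_of_mul_eq_mul_left (Nat.factorial_pos l)
  calc l.factorial * ((d+l).choose l * d.factorial)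
      = (d+l).choose l * l.factorial * d.factorial := by ring
    _ = (d+l).factorial := h
    _ = l.factorial * ∏ j ∈ range d, (l+1+j) := h2.symm

lemma RMS_cast_prod (d l : ℕ) :
    ((d+l).choose l : ℝ) * (d.factorial : ℝ) = ∏ j ∈ range d, ((l:ℝ)+1+j) := by
  have h := RMS_choose_mul d l
  have h2 : (((d+l).choose l * d.factorial : ℕ) : ℝ)
      = ((∏ j ∈ range d, (l+1+j) : ℕ) : ℝ) := by rw [h]
  push_cast at h2
  convert h2 using 2 with j hj

lemma RMS_mult_eq {d : ℕ} (hd : 2 ≤ d) (l : ℕ) :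
    sphereMult d l * (d.factorial : ℝ)
      = ∏ j ∈ range d, ((l:ℝ)+1+j) - ∏ j ∈ range d, ((l:ℝ)-1+j) := by
  unfold sphereMult
  by_cases hl : 2 ≤ l
  · rw [if_pos hl]
    obtain ⟨k, rfl⟩ : ∃ k, l = k + 2 := ⟨l-2, by omega⟩
    have h1 := RMS_cast_prod d (k+2)
    have h2 := RMS_cast_prod d k
    rw [show d + (k+2) - 2 = d + k by omega, show (k+2)-2 = k by omega, sub_mul, h1, h2]
    have h3 : ∏ j ∈ range d, ((((k+2:ℕ)):ℝ)-1+(j:ℝ)) = ∏ j ∈ range d, ((k:ℝ)+1+(j:ℝ)) := by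
      apply Finset.prod_congr rfl; intro j hj; push_cast; ring
    rw [h3]
  · rw [if_neg hl]
    have h1 := RMS_cast_prod d l
    have h2 : ∏ j ∈ range d, ((l:ℝ)-1+(j:ℝ)) = 0 := by
      interval_cases l
      · exact Finset.prod_eq_zero (Finset.mem_range.2 (by omega : 1 < d)) (by norm_num)
      · exact Finset.prod_eq_zero (Finset.mem_range.2 (by omega : 0 < d)) (by norm_num)
    rw [h2, sub_zero, sub_zero, h1]

lemma RMS_prod_shift (x : ℝ) (n : ℕ) :
    ∏ j ∈ range (n+1), (x+(j:ℝ)) = (∏ j ∈ range n, (x+1+(j:ℝ))) * x := by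
  rw [Finset.prod_range_succ' (fun j => x + (j:ℝ)) n]
  simp only [Nat.cast_add, Nat.cast_zero, Nat.cast_one, add_zero]
  congr 1
  apply Finset.prod_congr rfl; intro j hj; ring

lemma RMS_Nsum {d : ℕ} (hd : 2 ≤ d) (L : ℕ) :
    (∑ l ∈ range (L+1), sphereMult d l) * (d.factorial : ℝ)
      = (2*(L:ℝ)+d) * ∏ j ∈ range (d-1), ((L:ℝ)+1+j) := by
  obtain ⟨e, rfl⟩ : ∃ e, d = e + 2 := ⟨d-2, by omega⟩
  have hd1 : e + 2 - 1 = e + 1 := by omega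
  rw [hd1]
  induction L with
  | zero =>
    rw [Finset.sum_range_one, RMS_mult_eq hd 0]
    have h0 : ∏ j ∈ range (e+2), (((0:ℕ):ℝ)-1+(j:ℝ)) = 0 :=
      Finset.prod_eq_zero (Finset.mem_range.2 (by omega : 1 < e+2)) (by norm_num)
    rw [h0, sub_zero, Finset.prod_range_succ]
    push_cast
    ring
  | succ n ih =>
    rw [Finset.sum_range_succ, add_mul, ih, RMS_mult_eq hd (n+1)]
    set Pa := ∏ j ∈ range (e+1), ((n:ℝ)+1+j) with hPa
    set Pb := ∏ j ∈ range (e+1), ((n:ℝ)+2+j) with hPb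
    have cA : ∏ j ∈ range (e+2), (((n+1:ℕ):ℝ)+1+(j:ℝ)) = Pb * ((n:ℝ)+(e:ℝ)+3) := by
      rw [Finset.prod_range_succ]
      congr 1
      · apply Finset.prod_congr rfl; intro j hj; push_cast; ring
      · push_cast; ring
    have cB : ∏ j ∈ range (e+2), (((n+1:ℕ):ℝ)-1+(j:ℝ)) = Pa * (n:ℝ) := by
      rw [show (∏ j ∈ range (e+2), (((n+1:ℕ):ℝ)-1+(j:ℝ)))
          = ∏ j ∈ range (e+2), ((n:ℝ)+(j:ℝ)) from
        Finset.prod_congr rfl (by intro j hj; push_cast; ring), RMS_prod_shift (n:ℝ) (e+1)]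
    have cC : ∏ j ∈ range (e+1), (((n+1:ℕ):ℝ)+1+(j:ℝ)) = Pb := by
      apply Finset.prod_congr rfl; intro j hj; push_cast; ring
    have rel : Pa * ((n:ℝ)+(e:ℝ)+2) = ((n:ℝ)+1) * Pb := by
      have t1 := Finset.prod_range_succ (fun j : ℕ => (n:ℝ)+1+(j:ℝ)) (e+1)
      have t2 := Finset.prod_range_succ' (fun j : ℕ => (n:ℝ)+1+(j:ℝ)) (e+1)
      have t3 : ∏ j ∈ range (e+1), ((n:ℝ)+1+((j+1:ℕ):ℝ)) = Pb := by
        apply Finset.prod_congr rfl; intro j hj; push_cast; ring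
      rw [t2, t3] at t1
      push_cast at t1 ⊢
      linarith [t1]
    rw [cA, cB, cC]
    push_cast
    linear_combination rel

lemma RMS_lam_succ (d l : ℕ) : RMSlam d (l+1) - RMSlam d l = 2*(l:ℝ)+d := by
  unfold RMSlam; push_cast; ring

lemma RMS_A {d : ℕ} (hd : 2 ≤ d) (L : ℕ) :
    (∑ l ∈ range (L+1), sphereMult d l * (RMSlam d L - RMSlam d l)) * (d.factorial : ℝ)
      = ∑ l ∈ range L, RMSg d l := by
  induction L with
  | zero => simp
  | succ n ih =>
    have split : ∀ l : ℕ, sphereMult d l * (RMSlam d (n+1) - RMSlam d l)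
        = sphereMult d l * (RMSlam d n - RMSlam d l) + sphereMult d l * (2*(n:ℝ)+d) := by
      intro l
      linear_combination sphereMult d l * RMS_lam_succ d n
    calc (∑ l ∈ range (n+2), sphereMult d l * (RMSlam d (n+1) - RMSlam d l)) * (d.factorial : ℝ)
        = (∑ l ∈ range (n+1), sphereMult d l * (RMSlam d (n+1) - RMSlam d l)) * (d.factorial : ℝ) := by
          rw [Finset.sum_range_succ]; simp
      _ = ((∑ l ∈ range (n+1), sphereMult d l * (RMSlam d n - RMSlam d l))
            + (∑ l ∈ range (n+1), sphereMult d l) * (2*(n:ℝ)+d)) * (d.factorial : ℝ) := by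
          congr 1
          rw [Finset.sum_mul, ← Finset.sum_add_distrib]
          exact Finset.sum_congr rfl (fun l _ => split l)
      _ = ∑ l ∈ range n, RMSg d l + (2*(n:ℝ)+d) * ((2*(n:ℝ)+d) * ∏ j ∈ range (d-1), ((n:ℝ)+1+j)) := by
          rw [add_mul, ih]
          congr 1
          rw [mul_comm (∑ l ∈ range (n+1), sphereMult d l) (2*(n:ℝ)+d), mul_assoc,
            RMS_Nsum hd n]
      _ = ∑ l ∈ range (n+1), RMSg d l := by
          rw [Finset.sum_range_succ]
          unfold RMSg
          ring

lemma RMS_tangent {q x : ℝ} (hq : 1 ≤ q) (hx : 1 ≤ x) :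
    x ^ q ≤ 1 + q * x ^ (q-1) * (x-1) := by
  have hx0 : (0:ℝ) < x := lt_of_lt_of_le zero_lt_one hx
  have hu : 0 < x ^ q := Real.rpow_pos_of_pos hx0 q
  have hv : x ^ (q-1) * x = x ^ q := by
    rw [← Real.rpow_add_one hx0.ne' (q-1), sub_add_cancel]
  have hs : (-1:ℝ) ≤ x⁻¹ - 1 := by
    have : (0:ℝ) ≤ x⁻¹ := by positivity
    linarith
  have hb := one_add_mul_self_le_rpow_one_add hs hq
  rw [show 1 + (x⁻¹ - 1) = x⁻¹ by ring, Real.inv_rpow hx0.le] at hb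
  have hmul := mul_le_mul_of_nonneg_right hb hu.le
  rw [inv_mul_cancel₀ hu.ne'] at hmul
  have hinv : x⁻¹ * x ^ q = x ^ (q-1) := by
    rw [← hv]; field_simp
  have h2 : x ^ q + q * x ^ (q-1) - q * x ^ q ≤ 1 := by nlinarith [hmul, hinv]
  have h3 : x ^ (q-1) * (x-1) = x ^ q - x ^ (q-1) := by rw [← hv]; ring
  rw [mul_assoc, h3]; linarith

lemma RMS_scalar {q x : ℝ} (hq : 1 ≤ q) (hx : 1 ≤ x) :
    2 * (x ^ (q+1) - 1) ≤ (q+1) * (x-1) * (x ^ q + 1) := by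
  set φ : ℝ → ℝ := fun y => (q+1) * ((y-1) * (y ^ q + 1)) - 2 * (y ^ (q+1) - 1) with hφ
  have hder : ∀ y ∈ interior (Set.Ici (1:ℝ)), HasDerivAt φ
      ((q+1) * (1 * (y ^ q + 1) + (y-1) * (q * y ^ (q-1))) - 2 * ((q+1) * y ^ q)) y := by
    intro y hy
    rw [interior_Ici] at hy
    have hy0 : y ≠ 0 := by
      have : (1:ℝ) < y := hy
      positivity
    have h1 : HasDerivAt (fun y : ℝ => y ^ q) (q * y ^ (q-1)) y :=
      Real.hasDerivAt_rpow_const (Or.inl hy0)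
    have h2 : HasDerivAt (fun y : ℝ => y ^ (q+1)) ((q+1) * y ^ q) y := by
      have := Real.hasDerivAt_rpow_const (x := y) (p := q+1) (Or.inl hy0)
      simpa using this
    exact ((((hasDerivAt_id y).sub_const 1).mul (h1.add_const 1)).const_mul (q+1)).sub
      ((h2.sub_const 1).const_mul 2)
  have hmono : MonotoneOn φ (Set.Ici 1) := by
    apply monotoneOn_of_deriv_nonneg (convex_Ici 1)
    · -- continuity
      apply ContinuousOn.sub
      · apply ContinuousOn.mul continuousOn_const
        apply ContinuousOn.mul (by fun_prop)
        apply ContinuousOn.add _ continuousOn_const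
        exact ContinuousOn.rpow_const continuousOn_id (fun y hy => Or.inl (by
          have : (1:ℝ) ≤ y := hy
          positivity))
      · apply ContinuousOn.mul continuousOn_const
        apply ContinuousOn.sub _ continuousOn_const
        exact ContinuousOn.rpow_const continuousOn_id (fun y hy => Or.inl (by
          have : (1:ℝ) ≤ y := hy
          positivity))
    · intro y hy
      exact (hder y hy).differentiableAt.differentiableWithinAt
    · intro y hy
      rw [(hder y hy).deriv]
      rw [interior_Ici] at hy
      have ht := RMS_tangent hq (le_of_lt hy)
      nlinarith [ht, hq]
  have h1 : φ 1 ≤ φ x := hmono (by simp) (by exact hx) hx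
  have hφ1 : φ 1 = 0 := by
    simp [hφ, Real.one_rpow]
  rw [hφ1] at h1
  simp only [hφ] at h1
  nlinarith [h1]

lemma RMS_L1 {q A B : ℝ} (hq : 1 ≤ q) (hB : 0 ≤ B) (hBA : B ≤ A) :
    A ^ (q+1) - B ^ (q+1) ≤ (q+1)/2 * (A-B) * (A ^ q + B ^ q) := by
  rcases eq_or_lt_of_le hB with hB0 | hB0
  · -- B = 0
    rw [← hB0]
    rw [Real.zero_rpow (by linarith : q+1 ≠ 0), Real.zero_rpow (by linarith : q ≠ 0)]
    rcases eq_or_lt_of_le (hB0 ▸ hBA : (0:ℝ) ≤ A) with hA0 | hA0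
    · rw [← hA0, Real.zero_rpow (by linarith : q+1 ≠ 0)]; norm_num
    · have hA : A ^ (q+1) = A ^ q * A := Real.rpow_add_one hA0.ne' q
      have hAq : 0 < A ^ q := Real.rpow_pos_of_pos hA0 q
      rw [hA]
      nlinarith [mul_nonneg (mul_nonneg (by linarith : (0:ℝ) ≤ q - 1) hAq.le) hA0.le]
  · -- 0 < B
    have hBne : B ≠ 0 := hB0.ne'
    set u := A / B with hu
    have hu1 : 1 ≤ u := (one_le_div hB0).2 hBA
    have hu0 : (0:ℝ) ≤ u := by linarith
    have key := RMS_scalar hq hu1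
    have hA' : A = u * B := by rw [hu]; field_simp
    have hBq : (0:ℝ) < B ^ q := Real.rpow_pos_of_pos hB0 q
    have e3 : B ^ (q+1) = B ^ q * B := Real.rpow_add_one hBne q
    rw [hA', Real.mul_rpow hu0 hB, Real.mul_rpow hu0 hB, e3]
    nlinarith [mul_le_mul_of_nonneg_right key (mul_nonneg hBq.le hB),
      Real.rpow_nonneg hu0 (q+1), Real.rpow_nonneg hu0 q]

lemma RMS_pairing (d : ℕ) (x : ℝ) (hx : 0 ≤ x) :
    (x * (x + d - 1)) ^ (d:ℕ) ≤ (∏ j ∈ range d, (x + j))^2 := by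
  have key : (∏ j ∈ range d, (x + j))^2
      = ∏ j ∈ range d, ((x + j) * (x + ((d-1-j : ℕ):ℝ))) := by
    rw [Finset.prod_mul_distrib, sq]
    congr 1
    exact (Finset.prod_range_reflect (fun j => x + (j:ℝ)) d).symm
  rw [key, show (x * (x + d - 1)) ^ (d:ℕ)
      = ∏ _j ∈ range d, (x * (x + (d:ℝ) - 1)) by rw [Finset.prod_const, Finset.card_range]]
  apply Finset.prod_le_prod
  · intro j hj
    have hj' : j < d := Finset.mem_range.1 hj
    have h1 : (0:ℝ) ≤ x + (d:ℝ) - 1 := by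
      have : (1:ℝ) ≤ (d:ℝ) := by exact_mod_cast Nat.one_le_iff_ne_zero.2 (by omega)
      linarith
    nlinarith [h1, hx]
  · intro j hj
    have hj' : j < d := Finset.mem_range.1 hj
    have hc : ((d-1-j : ℕ):ℝ) = (d:ℝ) - 1 - (j:ℝ) := by
      have : ((d-1-j : ℕ):ℕ) = d - 1 - j := rfl
      push_cast [Nat.cast_sub (by omega : j ≤ d - 1), Nat.cast_sub (by omega : 1 ≤ d)]
      ring
    rw [hc]
    have hj0 : (0:ℝ) ≤ (j:ℝ) := Nat.cast_nonneg j
    have hjd : (j:ℝ) ≤ (d:ℝ) - 1 := by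
      have : (j:ℝ) + 1 ≤ (d:ℝ) := by exact_mod_cast Nat.succ_le_of_lt hj'
      linarith
    nlinarith [mul_nonneg hj0 (by linarith : (0:ℝ) ≤ (d:ℝ) - 1 - (j:ℝ))]

/-- from the pairing bound to the rpow form -/
lemma RMS_rpow_prod (d : ℕ) (hd : 1 ≤ d) (x : ℝ) (hx : 0 ≤ x) :
    (x * (x + d - 1)) ^ ((d:ℝ)/2) ≤ ∏ j ∈ range d, (x + j) := by
  set a := ∏ j ∈ range d, (x + j) with ha
  have ha0 : 0 ≤ a := Finset.prod_nonneg (fun j _ => by positivity)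
  have hb0 : 0 ≤ x * (x + d - 1) := by
    have : (1:ℝ) ≤ (d:ℝ) := by exact_mod_cast hd
    nlinarith [hx]
  have key := RMS_pairing d x hx
  calc (x * (x + d - 1)) ^ ((d:ℝ)/2)
      = ((x * (x + d - 1)) ^ (d:ℕ)) ^ ((2:ℝ)⁻¹) := by
        rw [← Real.rpow_natCast (x * (x + d - 1)) d, ← Real.rpow_mul hb0]
        ring_nf
    _ ≤ (a^2) ^ ((2:ℝ)⁻¹) := Real.rpow_le_rpow (by positivity) key (by norm_num)
    _ = a := by
        rw [← Real.rpow_natCast a 2, ← Real.rpow_mul ha0]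
        norm_num

lemma RMS_L2 {d : ℕ} (hd : 2 ≤ d) (l : ℕ) :
    ((((l:ℝ)+1) * ((l:ℝ)+d)) ^ ((d:ℝ)/2) + ((l:ℝ) * ((l:ℝ)+d-1)) ^ ((d:ℝ)/2))
      ≤ (2*(l:ℝ)+d) * ∏ j ∈ range (d-1), ((l:ℝ)+1+j) := by
  obtain ⟨e, rfl⟩ : ∃ e, d = e + 2 := ⟨d-2, by omega⟩
  have hd1 : e + 2 - 1 = e + 1 := by omega
  rw [hd1]
  have h1 := RMS_rpow_prod (e+2) (by omega) ((l:ℝ)+1) (by positivity)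
  have h2 := RMS_rpow_prod (e+2) (by omega) (l:ℝ) (Nat.cast_nonneg l)
  set P := ∏ j ∈ range (e+1), ((l:ℝ)+1+j) with hP
  have hP0 : 0 ≤ P := Finset.prod_nonneg (fun j _ => by positivity)
  have c1 : ∏ j ∈ range (e+2), ((l:ℝ)+1+j) = P * ((l:ℝ)+(e:ℝ)+2) := by
    rw [Finset.prod_range_succ]
    congr 1
    push_cast; ring
  have c2 : ∏ j ∈ range (e+2), ((l:ℝ)+j) = P * (l:ℝ) := by
    rw [Finset.prod_range_succ' (fun j : ℕ => (l:ℝ) + (j:ℝ)) (e+1)]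
    simp only [Nat.cast_zero, add_zero]
    congr 1
    apply Finset.prod_congr rfl; intro j hj; push_cast; ring
  have e1 : ((l:ℝ)+1) * (((l:ℝ)+1) + ((e:ℕ)+2:ℝ) - 1) = ((l:ℝ)+1) * ((l:ℝ)+((e+2:ℕ):ℝ)) := by
    push_cast; ring
  -- rewrite h1 and h2 targets
  have h1' : (((l:ℝ)+1) * ((l:ℝ)+((e+2:ℕ):ℝ))) ^ (((e+2:ℕ):ℝ)/2) ≤ P * ((l:ℝ)+(e:ℝ)+2) := by
    calc (((l:ℝ)+1) * ((l:ℝ)+((e+2:ℕ):ℝ))) ^ (((e+2:ℕ):ℝ)/2)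
        = (((l:ℝ)+1) * (((l:ℝ)+1) + ((e+2:ℕ):ℝ) - 1)) ^ (((e+2:ℕ):ℝ)/2) := by
          congr 1; push_cast; ring
      _ ≤ ∏ j ∈ range (e+2), (((l:ℝ)+1) + j) := h1
      _ = ∏ j ∈ range (e+2), ((l:ℝ)+1+j) := by
          apply Finset.prod_congr rfl; intro j hj; ring
      _ = P * ((l:ℝ)+(e:ℝ)+2) := c1
  have h2' : ((l:ℝ) * ((l:ℝ)+((e+2:ℕ):ℝ)-1)) ^ (((e+2:ℕ):ℝ)/2) ≤ P * (l:ℝ) := by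
    calc ((l:ℝ) * ((l:ℝ)+((e+2:ℕ):ℝ)-1)) ^ (((e+2:ℕ):ℝ)/2)
        ≤ ∏ j ∈ range (e+2), ((l:ℝ) + j) := h2
      _ = P * (l:ℝ) := c2
  have : (2*(l:ℝ)+((e+2:ℕ):ℝ)) * P = P * ((l:ℝ)+(e:ℝ)+2) + P * (l:ℝ) := by
    push_cast; ring
  rw [this]
  exact add_le_add h1' h2'

lemma RMS_step {d : ℕ} (hd : 2 ≤ d) (l : ℕ) :
    4/((d:ℝ)+2) * ((RMSlam d (l+1)) ^ ((d:ℝ)/2+1) - (RMSlam d l) ^ ((d:ℝ)/2+1))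
      ≤ RMSg d l := by
  set q : ℝ := (d:ℝ)/2 with hqdef
  have hq : 1 ≤ q := by
    rw [hqdef]
    have : (2:ℝ) ≤ (d:ℝ) := by exact_mod_cast hd
    linarith
  have hA : RMSlam d (l+1) = ((l:ℝ)+1) * ((l:ℝ)+d) := by
    unfold RMSlam; push_cast; ring
  have hB : RMSlam d l = (l:ℝ) * ((l:ℝ)+d-1) := rfl
  have hd2 : (0:ℝ) < (d:ℝ)+2 := by positivity
  have hB0 : (0:ℝ) ≤ RMSlam d l := by
    rw [hB]
    have : (2:ℝ) ≤ (d:ℝ) := by exact_mod_cast hd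
    nlinarith [Nat.cast_nonneg (α := ℝ) l]
  have hBA : RMSlam d l ≤ RMSlam d (l+1) := by
    rw [hA, hB]; nlinarith [Nat.cast_nonneg (α := ℝ) l, (by exact_mod_cast hd : (2:ℝ) ≤ (d:ℝ))]
  have h1 := RMS_L1 (A := RMSlam d (l+1)) (B := RMSlam d l) hq hB0 hBA
  have h2 := RMS_L2 hd l
  rw [← hA, ← hB] at h2
  have hAB : RMSlam d (l+1) - RMSlam d l = 2*(l:ℝ)+d := by
    unfold RMSlam; push_cast; ring
  rw [hAB] at h1
  have hstep : 4/((d:ℝ)+2) * ((RMSlam d (l+1)) ^ (q+1) - (RMSlam d l) ^ (q+1))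
      ≤ (2*(l:ℝ)+d) * ((RMSlam d (l+1)) ^ q + (RMSlam d l) ^ q) := by
    have hc : 4/((d:ℝ)+2) * ((q+1)/2) = 1 := by
      rw [hqdef]; field_simp; ring
    calc 4/((d:ℝ)+2) * ((RMSlam d (l+1)) ^ (q+1) - (RMSlam d l) ^ (q+1))
        ≤ 4/((d:ℝ)+2) * ((q+1)/2 * (2*(l:ℝ)+d) * ((RMSlam d (l+1)) ^ q + (RMSlam d l) ^ q)) := by
          apply mul_le_mul_of_nonneg_left h1 (by positivity)
      _ = (2*(l:ℝ)+d) * ((RMSlam d (l+1)) ^ q + (RMSlam d l) ^ q) := by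
          field_simp
          ring
  have hfin : (2*(l:ℝ)+d) * ((RMSlam d (l+1)) ^ q + (RMSlam d l) ^ q) ≤ RMSg d l := by
    unfold RMSg
    have h2l : (0:ℝ) ≤ 2*(l:ℝ)+d := by positivity
    calc (2*(l:ℝ)+d) * ((RMSlam d (l+1)) ^ q + (RMSlam d l) ^ q)
        ≤ (2*(l:ℝ)+d) * ((2*(l:ℝ)+d) * ∏ j ∈ range (d-1), ((l:ℝ)+1+j)) := by
          apply mul_le_mul_of_nonneg_left _ h2l
          rw [hqdef]
          exact h2
      _ = (2*(l:ℝ)+d)^2 * ∏ j ∈ range (d-1), ((l:ℝ)+1+j) := by ring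
  exact le_trans hstep hfin

lemma RMS_telescope {d : ℕ} (hd : 2 ≤ d) (L : ℕ) :
    4/((d:ℝ)+2) * (RMSlam d L) ^ ((d:ℝ)/2+1) ≤ ∑ l ∈ range L, RMSg d l := by
  induction L with
  | zero =>
    have h0 : RMSlam d 0 = 0 := by unfold RMSlam; push_cast; ring
    rw [h0, Real.zero_rpow (by positivity : (0:ℝ) < (d:ℝ)/2+1).ne']
    simp
  | succ n ih =>
    rw [Finset.sum_range_succ]
    have := RMS_step hd n
    linarith

lemma RMS_lam_mono {d : ℕ} (hd : 2 ≤ d) : Monotone (RMSlam d) := by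
  intro a b hab
  unfold RMSlam
  have h1 : (a:ℝ) ≤ (b:ℝ) := by exact_mod_cast hab
  have h2 : (2:ℝ) ≤ (d:ℝ) := by exact_mod_cast hd
  nlinarith [Nat.cast_nonneg (α := ℝ) a, Nat.cast_nonneg (α := ℝ) b]

lemma RMS_lam_ge {d : ℕ} (hd : 2 ≤ d) (l : ℕ) : (l:ℝ) ≤ RMSlam d l := by
  unfold RMSlam
  have h2 : (2:ℝ) ≤ (d:ℝ) := by exact_mod_cast hd
  nlinarith [Nat.cast_nonneg (α := ℝ) l]

theorem riesz_mean_sphere_weyl_lower_bound (d : ℕ) (hd : 2 ≤ d) (z : ℝ) (hz : 0 ≤ z) :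
    R1Sd d z ≥ 4 / (((d : ℝ) + 2) * (Nat.factorial d : ℝ)) * z ^ ((d : ℝ) / 2 + 1) := by
  classical
  -- find L with lam L ≤ z < lam (L+1)
  have hex : ∃ l : ℕ, z < RMSlam d l := by
    refine ⟨⌈z⌉₊ + 1, lt_of_lt_of_le ?_ (RMS_lam_ge hd _)⟩
    push_cast
    have := Nat.le_ceil z
    linarith
  obtain ⟨L, hL1, hL2⟩ : ∃ L : ℕ, RMSlam d L ≤ z ∧ z < RMSlam d (L+1) := by
    have h0 : ¬ z < RMSlam d 0 := by
      unfold RMSlam; push_cast; simp; linarith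
    have hfind := Nat.find_spec hex
    have hne : Nat.find hex ≠ 0 := by
      intro h; rw [h] at hfind; exact h0 hfind
    obtain ⟨L, hL⟩ : ∃ L, Nat.find hex = L + 1 := ⟨Nat.find hex - 1, by omega⟩
    refine ⟨L, ?_, by rw [← hL]; exact hfind⟩
    have := Nat.find_min hex (by omega : L < Nat.find hex)
    linarith [not_lt.1 this]
  -- R1Sd as finite sum
  have hsum : R1Sd d z = ∑ l ∈ range (L+1), sphereMult d l * (z - RMSlam d l) := by
    have hvanish : ∀ l : ℕ, l ∉ range (L+1) →
        sphereMult d l * max (z - (l:ℝ)*((l:ℝ)+(d:ℝ)-1)) 0 = 0 := by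
      intro l hl
      have hl' : L + 1 ≤ l := by
        by_contra h
        exact hl (Finset.mem_range.2 (by omega))
      have hmono := RMS_lam_mono hd hl'
      have hneg : z - (l:ℝ)*((l:ℝ)+(d:ℝ)-1) < 0 := by
        unfold RMSlam at hmono hL2; linarith
      rw [max_eq_right hneg.le, mul_zero]
    unfold R1Sd
    rw [tsum_eq_sum hvanish]
    apply Finset.sum_congr rfl
    intro l hl
    have hl' : l ≤ L := Nat.lt_succ_iff.1 (Finset.mem_range.1 hl)
    have hle : RMSlam d l ≤ z := le_trans (RMS_lam_mono hd hl') hL1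
    have hnn : 0 ≤ z - (l:ℝ)*((l:ℝ)+(d:ℝ)-1) := by unfold RMSlam at hle; linarith
    rw [max_eq_left hnn]
    unfold RMSlam
    rfl
  -- convex combination setup
  set D : ℝ := RMSlam d (L+1) - RMSlam d L with hD
  have hDval : D = 2*(L:ℝ)+d := by rw [hD]; unfold RMSlam; push_cast; ring
  have hDpos : 0 < D := by
    rw [hDval]
    have : (2:ℝ) ≤ (d:ℝ) := by exact_mod_cast hd
    positivity
  set b : ℝ := (z - RMSlam d L) / D with hb
  set a : ℝ := (RMSlam d (L+1) - z) / D with ha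
  have hb0 : 0 ≤ b := div_nonneg (by linarith) hDpos.le
  have ha0 : 0 ≤ a := div_nonneg (by linarith) hDpos.le
  have hab : a + b = 1 := by rw [ha, hb]; field_simp; rw [hD]; ring
  have hzcomb : a * RMSlam d L + b * RMSlam d (L+1) = z := by
    rw [ha, hb]; field_simp; ring
  -- R1Sd * d! = a * S_L + b * S_{L+1}
  have hfact0 : (0:ℝ) < (d.factorial : ℝ) := by exact_mod_cast Nat.factorial_pos d
  have hkey : R1Sd d z * (d.factorial : ℝ)
      = a * (∑ l ∈ range L, RMSg d l) + b * (∑ l ∈ range (L+1), RMSg d l) := by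
    have hsplit : ∀ l : ℕ, sphereMult d l * (z - RMSlam d l)
        = sphereMult d l * (RMSlam d L - RMSlam d l) + sphereMult d l * (z - RMSlam d L) := by
      intro l; ring
    have h1 : R1Sd d z = (∑ l ∈ range (L+1), sphereMult d l * (RMSlam d L - RMSlam d l))
        + (∑ l ∈ range (L+1), sphereMult d l) * (z - RMSlam d L) := by
      rw [hsum, Finset.sum_mul, ← Finset.sum_add_distrib]
      exact Finset.sum_congr rfl (fun l _ => hsplit l)
    have hSL1 : ∑ l ∈ range (L+1), RMSg d l = ∑ l ∈ range L, RMSg d l + RMSg d L :=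
      Finset.sum_range_succ _ _
    have hzL : z - RMSlam d L = b * D := by rw [hb]; field_simp
    calc R1Sd d z * (d.factorial : ℝ)
        = (∑ l ∈ range (L+1), sphereMult d l * (RMSlam d L - RMSlam d l)) * (d.factorial : ℝ)
          + (z - RMSlam d L) * ((∑ l ∈ range (L+1), sphereMult d l) * (d.factorial : ℝ)) := by
          rw [h1]; ring
      _ = (∑ l ∈ range L, RMSg d l) + (b * D) * ((2*(L:ℝ)+d) * ∏ j ∈ range (d-1), ((L:ℝ)+1+j)) := by
          rw [RMS_A hd L, RMS_Nsum hd L, hzL]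
      _ = (∑ l ∈ range L, RMSg d l) + b * RMSg d L := by
          rw [hDval]
          unfold RMSg
          ring
      _ = a * (∑ l ∈ range L, RMSg d l) + b * (∑ l ∈ range (L+1), RMSg d l) := by
          rw [hSL1]
          have : a = 1 - b := by linarith
          rw [this]; ring
  -- convexity
  set p : ℝ := (d:ℝ)/2 + 1 with hp
  have hp1 : 1 ≤ p := by
    rw [hp]
    have : (0:ℝ) ≤ (d:ℝ) := Nat.cast_nonneg d
    linarith
  have hlamL0 : (0:ℝ) ≤ RMSlam d L := by
    have h2 : (2:ℝ) ≤ (d:ℝ) := by exact_mod_cast hd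
    unfold RMSlam; nlinarith [Nat.cast_nonneg (α := ℝ) L]
  have hlamL10 : (0:ℝ) ≤ RMSlam d (L+1) := by linarith
  have hconv := (convexOn_rpow hp1).2 (Set.mem_Ici.2 hlamL0) (Set.mem_Ici.2 hlamL10) ha0 hb0 hab
  simp only [smul_eq_mul] at hconv
  rw [hzcomb] at hconv
  -- combine
  have htel1 := RMS_telescope hd L
  have htel2 := RMS_telescope hd (L+1)
  have hmain : 4/((d:ℝ)+2) * z ^ p ≤ R1Sd d z * (d.factorial : ℝ) := by
    rw [hkey]
    calc 4/((d:ℝ)+2) * z ^ p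
        ≤ 4/((d:ℝ)+2) * (a * (RMSlam d L) ^ p + b * (RMSlam d (L+1)) ^ p) := by
          apply mul_le_mul_of_nonneg_left _ (by positivity)
          exact hconv
      _ = a * (4/((d:ℝ)+2) * (RMSlam d L) ^ p) + b * (4/((d:ℝ)+2) * (RMSlam d (L+1)) ^ p) := by
          ring
      _ ≤ a * (∑ l ∈ range L, RMSg d l) + b * (∑ l ∈ range (L+1), RMSg d l) := by
          apply add_le_add
          · exact mul_le_mul_of_nonneg_left htel1 ha0
          · exact mul_le_mul_of_nonneg_left htel2 hb0
  rw [ge_iff_le]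
  rw [show 4 / (((d : ℝ) + 2) * (Nat.factorial d : ℝ)) * z ^ p
      = (4/((d:ℝ)+2) * z ^ p) / (d.factorial : ℝ) by field_simp]
  rw [div_le_iff₀ hfact0]
  linarith
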